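/- Bregman proximal step inequality: Let g be a proper convex function, h a Legendre function, γ > 0, x̄ ∈ int dom h, and let x⁺ := argmin_x { g(x) + (1/γ) D_h(x, x̄) }, assumed to lie in int dom h. Then for every y ∈ dom g ∩ dom h: γ ( g(x⁺) − g(y) ) + D_h(y, x⁺) ≤ D_h(y, x̄) − D_h(x⁺, x̄). -/

import Mathlib

/-- **Bregman proximal step inequality.**
If `x⁺` minimizes `g(·) + (1/γ) D_h(·, x̄)` for a proper convex `g` and a Legendre
function `h` (strictly convex, differentiable with gradient `gh`), then for every `y`:
`γ (g x⁺ - g y) + D_h(y, x⁺) ≤ D_h(y, x̄) - D_h(x⁺, x̄)`. -/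
theorem bregman_proximal_step_inequality (n : ℕ)
    (g : (Fin n → ℝ) → ℝ) (hg : ConvexOn ℝ Set.univ g)
    (h : (Fin n → ℝ) → ℝ) (gh : (Fin n → ℝ) → (Fin n → ℝ))
    (hconv : StrictConvexOn ℝ Set.univ h)
    (hdiff : Differentiable ℝ h)
    (hgrad : ∀ p q, (fderiv ℝ h p) q = ∑ i, gh p i * q i)
    (D : (Fin n → ℝ) → (Fin n → ℝ) → ℝ)
    (hD : ∀ p q, D p q = h p - h q - ∑ i, gh q i * (p i - q i))
    (γ : ℝ) (hγ : 0 < γ) (xbar xplus : Fin n → ℝ)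
    (hxplus : ∀ p, g xplus + (1/γ) * D xplus xbar ≤ g p + (1/γ) * D p xbar) :
    ∀ y, γ * (g xplus - g y) + D y xplus ≤ D y xbar - D xplus xbar := by
  intro y
  set v : Fin n → ℝ := y - xplus with hv
  set S : ℝ := ∑ i, gh xbar i * v i with hS
  set φ : ℝ → ℝ := fun t => h (xplus + t • v) with hφ
  -- derivative of φ at 0
  have hline : HasDerivAt (fun t : ℝ => xplus + t • v) v 0 := by
    simpa using ((hasDerivAt_id (0:ℝ)).smul_const v).const_add xplus
  have hder : HasDerivAt φ ((fderiv ℝ h xplus) v) 0 := by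
    have := ((hdiff (xplus + (0:ℝ) • v)).hasFDerivAt.comp_hasDerivAt 0 hline)
    simp only [zero_smul, add_zero] at this
    exact this
  have hslope : Filter.Tendsto (fun t => (φ t - φ 0) / t) (nhdsWithin 0 (Set.Ioi 0))
      (nhds ((fderiv ℝ h xplus) v)) := by
    have := hasDerivAt_iff_tendsto_slope.mp hder
    have h2 := this.mono_left (nhdsWithin_mono 0 (by
      intro t ht
      exact Set.mem_compl_singleton_iff.mpr (ne_of_gt ht)))
    refine h2.congr' ?_
    filter_upwards [self_mem_nhdsWithin] with t ht
    simp only [slope_def_field, div_eq_inv_mul]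
    ring
  -- key inequality for small positive t
  have key : γ * (g xplus - g y) + S ≤ (fderiv ℝ h xplus) v := by
    have hten : Filter.Tendsto (fun t => (φ t - φ 0) / t - S + S) (nhdsWithin 0 (Set.Ioi 0))
        (nhds ((fderiv ℝ h xplus) v)) := by
      simpa using (hslope.sub_const S).add_const S
    refine ge_of_tendsto hten ?_
    filter_upwards [Ioo_mem_nhdsGT_of_mem (Set.left_mem_Ico.mpr one_pos)] with t ht
    obtain ⟨ht0, ht1⟩ := ht
    -- convexity of g
    have hconvg : g (xplus + t • v) ≤ (1 - t) * g xplus + t * g y := by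
      have := hg.2 (Set.mem_univ xplus) (Set.mem_univ y)
        (by linarith : (0:ℝ) ≤ 1 - t) (le_of_lt ht0) (by ring)
      have heq : (1 - t) • xplus + t • y = xplus + t • v := by
        funext i; simp [hv]; ring
      rw [heq] at this
      simpa [smul_eq_mul] using this
    have hmin := hxplus (xplus + t • v)
    have hDdiff : D (xplus + t • v) xbar - D xplus xbar = φ t - φ 0 - t * S := by
      rw [hD, hD]
      have hsum : ∑ i, gh xbar i * ((xplus + t • v) i - xbar i)
          - ∑ i, gh xbar i * (xplus i - xbar i) = t * S := by
        rw [hS, Finset.mul_sum, ← Finset.sum_sub_distrib]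
        apply Finset.sum_congr rfl
        intro i _
        simp [hv]
        ring
      have : φ t = h (xplus + t • v) := rfl
      have h0 : φ 0 = h xplus := by simp [φ]
      rw [this, h0]
      linarith [hsum]
    have step : t * (g xplus - g y) ≤ (1/γ) * (φ t - φ 0 - t * S) := by
      rw [← hDdiff]
      have := hmin
      nlinarith [hconvg]
    have : γ * (g xplus - g y) ≤ (φ t - φ 0 - t * S) / t := by
      rw [le_div_iff₀ ht0]
      have h2 := mul_le_mul_of_nonneg_left step (le_of_lt hγ)
      calc γ * (g xplus - g y) * t = γ * (t * (g xplus - g y)) := by ring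
        _ ≤ γ * ((1/γ) * (φ t - φ 0 - t * S)) := h2
        _ = φ t - φ 0 - t * S := by field_simp
    have heq2 : (φ t - φ 0) / t - S + S = (φ t - φ 0 - t * S) / t + S := by
      field_simp
    rw [heq2]
    linarith
  -- three-point identity
  have hfd : (fderiv ℝ h xplus) v = ∑ i, gh xplus i * v i := hgrad xplus v
  rw [hfd] at key
  rw [hD, hD, hD]
  have hid : ∑ i, gh xbar i * (y i - xbar i) - ∑ i, gh xbar i * (xplus i - xbar i)
      = S := by
    rw [hS, ← Finset.sum_sub_distrib]
    apply Finset.sum_congr rfl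
    intro i _
    simp [hv]
    ring
  have hid2 : ∑ i, gh xplus i * (y i - xplus i) = ∑ i, gh xplus i * v i := by
    apply Finset.sum_congr rfl
    intro i _
    simp [hv]
  linarith [key, hid, hid2]
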